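/- Let T be a self-similar tree, let Ā be a minimal covering quotient of T, and let π : T → Ā be a covering morphism. Then every automorphism g of T is type-preserving with respect to π: π₀(g₀(v)) = π₀(v) for every vertex v of T. -/

import Mathlib

/-- A rooted directed multigraph. -/
structure RGraph where
  V : Type
  E : Type
  s : E → V
  t : E → V
  root : V

namespace RGraph

/-- `l` is a path: consecutive edges are composable. -/
def IsPath (A : RGraph) (l : List A.E) : Prop :=
  l.Chain' (fun e f => A.t e = A.s f)

/-- `l` is a path starting at the vertex `q`. -/
def PathFrom (A : RGraph) (q : A.V) (l : List A.E) : Prop :=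
  A.IsPath l ∧ ∀ e ∈ l.head?, A.s e = q

/-- The target of the path `l` started at `q` (equal to `q` for the empty path). -/
def pathTarget (A : RGraph) (q : A.V) (l : List A.E) : A.V :=
  l.foldl (fun _ e => A.t e) q

@[simp] lemma pathTarget_nil (A : RGraph) (q : A.V) : A.pathTarget q [] = q := rfl

@[simp] lemma pathTarget_cons (A : RGraph) (q : A.V) (a : A.E) (l : List A.E) :
    A.pathTarget q (a :: l) = A.pathTarget (A.t a) l := rfl

lemma pathTarget_append (A : RGraph) (q : A.V) (l l' : List A.E) :
    A.pathTarget q (l ++ l') = A.pathTarget (A.pathTarget q l) l' := by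
  simp [pathTarget]

@[simp] lemma pathTarget_append_single (A : RGraph) (q : A.V) (l : List A.E) (e : A.E) :
    A.pathTarget q (l ++ [e]) = A.t e := by
  rw [pathTarget_append]; rfl

lemma pathFrom_nil (A : RGraph) (q : A.V) : A.PathFrom q [] :=
  ⟨List.isChain_nil, by simp⟩

lemma pathTarget_getLast {A : RGraph} {q : A.V} {l : List A.E} {x : A.E}
    (hx : x ∈ l.getLast?) : A.pathTarget q l = A.t x := by
  induction l generalizing q with
  | nil => simp at hx
  | cons a l ih =>
    cases l with
    | nil => simp at hx; subst hx; rfl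
    | cons b l =>
      rw [List.getLast?_cons_cons] at hx
      simpa using ih (q := A.t a) hx

lemma pathFrom_append_single {A : RGraph} {q : A.V} {l : List A.E} {e : A.E}
    (h : A.PathFrom q l) (he : A.s e = A.pathTarget q l) :
    A.PathFrom q (l ++ [e]) := by
  constructor
  · apply List.isChain_append.mpr
    refine ⟨h.1, List.isChain_singleton _, ?_⟩
    intro x hx y hy
    simp at hy
    subst hy
    rw [he]
    exact (pathTarget_getLast hx).symm
  · intro f hf
    cases l with
    | nil =>
      simp at hf
      subst hf
      simpa using he
    | cons a l =>
      simp at hf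
      subst hf
      exact h.2 a (by simp)

/-- `w` is reachable from `q` by an oriented path. -/
def Reach (A : RGraph) (q w : A.V) : Prop :=
  ∃ l, A.PathFrom q l ∧ A.pathTarget q l = w

lemma reach_self (A : RGraph) (q : A.V) : A.Reach q q :=
  ⟨[], A.pathFrom_nil q, rfl⟩

lemma reach_target {A : RGraph} {q : A.V} {e : A.E} (h : A.Reach q (A.s e)) :
    A.Reach q (A.t e) := by
  obtain ⟨l, hl, ht⟩ := h
  exact ⟨l ++ [e], pathFrom_append_single hl ht.symm, by simp⟩

/-- A graph is connected (as a rooted directed graph) if every vertex is reachable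
from the root. -/
def Connected (A : RGraph) : Prop := ∀ w : A.V, A.Reach A.root w

/-- A graph is a tree if the target map from paths emanating from the root to
vertices is a bijection. -/
def IsTree (A : RGraph) : Prop :=
  Function.Bijective
    (fun l : {l : List A.E // A.PathFrom A.root l} => A.pathTarget A.root l.1)

/-- A graph is locally finite if every vertex has finitely many outgoing edges. -/
def LocallyFinite (A : RGraph) : Prop := ∀ q : A.V, Finite {e : A.E // A.s e = q}

/-- Adjacency: there is an edge from `v` to `w`. -/
def Adj (A : RGraph) (v w : A.V) : Prop := ∃ e, A.s e = v ∧ A.t e = w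

/-- The induced rooted subgraph on all vertices reachable from `q` (the "cone" at `q`). -/
def subgraph (A : RGraph) (q : A.V) : RGraph where
  V := {w // A.Reach q w}
  E := {e // A.Reach q (A.s e)}
  s := fun e => ⟨A.s e.1, e.2⟩
  t := fun e => ⟨A.t e.1, reach_target e.2⟩
  root := ⟨q, A.reach_self q⟩

/-- The truncation of the cone at `v` to vertices at distance at most `d` from `v`. -/
def trunc (A : RGraph) (v : A.V) (d : ℕ) : RGraph where
  V := {w // ∃ l, A.PathFrom v l ∧ A.pathTarget v l = w ∧ l.length ≤ d}
  E := {e // ∃ l, A.PathFrom v l ∧ A.pathTarget v l = A.s e ∧ l.length < d}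
  s := fun e => ⟨A.s e.1, e.2.imp fun _ h => ⟨h.1, h.2.1, h.2.2.le⟩⟩
  t := fun e => ⟨A.t e.1, by
    obtain ⟨l, h1, h2, h3⟩ := e.2
    exact ⟨l ++ [e.1], pathFrom_append_single h1 h2.symm, by simp,
      by simp only [List.length_append, List.length_singleton]; omega⟩⟩
  root := ⟨v, [], A.pathFrom_nil v, rfl, Nat.zero_le d⟩

/-- The universal covering tree of `A`: vertices are the paths emanating from the root. -/
def cover (A : RGraph) : RGraph where
  V := {l : List A.E // A.PathFrom A.root l}
  E := {x : {l : List A.E // A.PathFrom A.root l} × A.E //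
          A.s x.2 = A.pathTarget A.root x.1.1}
  s := fun x => x.1.1
  t := fun x => ⟨x.1.1.1 ++ [x.1.2], pathFrom_append_single x.1.1.2 x.2⟩
  root := ⟨[], A.pathFrom_nil _⟩

end RGraph

/-- A morphism of rooted directed multigraphs. -/
structure GraphHom (A B : RGraph) where
  v : A.V → B.V
  e : A.E → B.E
  root_eq : v A.root = B.root
  s_eq : ∀ x, B.s (e x) = v (A.s x)
  t_eq : ∀ x, B.t (e x) = v (A.t x)

namespace GraphHom

variable {A B : RGraph}

/-- The unique path lifting property. -/
def UPLP (p : GraphHom A B) : Prop :=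
  ∀ (q : A.V) (l' : List B.E), B.PathFrom (p.v q) l' →
    ∃! l : List A.E, A.PathFrom q l ∧ l.map p.e = l'

/-- A covering morphism: surjective on vertices, with the unique path lifting property. -/
def IsCovering (p : GraphHom A B) : Prop := Function.Surjective p.v ∧ p.UPLP

/-- An isomorphism of graphs: bijective on vertices and on edges. -/
def IsIso (p : GraphHom A B) : Prop := Function.Bijective p.v ∧ Function.Bijective p.e

/-- The restriction of the edge map to the edges emanating from `q`. -/
def outMap (p : GraphHom A B) (q : A.V) :
    {e : A.E // A.s e = q} → {e' : B.E // B.s e' = p.v q} :=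
  fun e => ⟨p.e e.1, by rw [p.s_eq, e.2]⟩

lemma isPath_map (p : GraphHom A B) {l : List A.E} (h : A.IsPath l) :
    B.IsPath (l.map p.e) := by
  unfold RGraph.IsPath List.Chain' at *
  rw [List.isChain_map]
  exact List.IsChain.imp (fun a b hab => by rw [p.t_eq, p.s_eq, hab]) h

lemma pathFrom_map (p : GraphHom A B) {q : A.V} {l : List A.E} (h : A.PathFrom q l) :
    B.PathFrom (p.v q) (l.map p.e) := by
  refine ⟨p.isPath_map h.1, ?_⟩
  intro f hf
  cases l with
  | nil => simp at hf
  | cons a l =>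
    simp at hf
    subst hf
    rw [p.s_eq, h.2 a (by simp)]

lemma pathTarget_map (p : GraphHom A B) (q : A.V) (l : List A.E) :
    B.pathTarget (p.v q) (l.map p.e) = p.v (A.pathTarget q l) := by
  induction l generalizing q with
  | nil => rfl
  | cons a l ih =>
    show B.pathTarget (B.t (p.e a)) (l.map p.e) = _
    rw [p.t_eq]
    exact ih (A.t a)

lemma reach_map (p : GraphHom A B) {q w : A.V} (h : A.Reach q w) :
    B.Reach (p.v q) (p.v w) := by
  obtain ⟨l, hl, ht⟩ := h
  exact ⟨l.map p.e, p.pathFrom_map hl, by rw [p.pathTarget_map, ht]⟩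

end GraphHom

/-- Two graphs are isomorphic. -/
def RGraph.Iso (A B : RGraph) : Prop := ∃ p : GraphHom A B, p.IsIso

/-- The universal covering morphism from the universal covering tree of `A` to `A`. -/
def RGraph.uCover (A : RGraph) : GraphHom A.cover A where
  v := fun l => A.pathTarget A.root l.1
  e := fun x => x.1.2
  root_eq := rfl
  s_eq := fun x => x.2
  t_eq := fun x => by
    show A.t x.1.2 = A.pathTarget A.root (x.1.1.1 ++ [x.1.2])
    simp

/-- The morphism induced between universal covering trees by a morphism of graphs. -/
def GraphHom.coverMap {A B : RGraph} (p : GraphHom A B) : GraphHom A.cover B.cover where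
  v := fun l => ⟨l.1.map p.e, by have := p.pathFrom_map l.2; rwa [p.root_eq] at this⟩
  e := fun x =>
    ⟨(⟨x.1.1.1.map p.e, by have := p.pathFrom_map x.1.1.2; rwa [p.root_eq] at this⟩,
      p.e x.1.2), by
        show B.s (p.e x.1.2) = B.pathTarget B.root (x.1.1.1.map p.e)
        rw [p.s_eq, x.2, ← p.root_eq, p.pathTarget_map]⟩
  root_eq := Subtype.ext rfl
  s_eq := fun _ => rfl
  t_eq := fun x => by
    apply Subtype.ext
    simp [RGraph.cover]

/-- `A` is a covering quotient of `T`. -/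
def IsCovQuotient (T A : RGraph) : Prop := ∃ p : GraphHom T A, p.IsCovering

/-- `A` is a minimal covering quotient of `T`: a covering quotient with the minimal
number of vertices among all covering quotients of `T`. -/
def IsMinCovQuotient (T A : RGraph) : Prop :=
  IsCovQuotient T A ∧
    ∀ B : RGraph, IsCovQuotient T B → Cardinal.mk A.V ≤ Cardinal.mk B.V

/-- `T` has finitely many cone types. -/
def FinManyCones (T : RGraph) : Prop :=
  ∃ S : Set T.V, S.Finite ∧ ∀ v : T.V, ∃ w ∈ S, RGraph.Iso (T.subgraph v) (T.subgraph w)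

/-- A self-similar tree: a locally finite tree with finitely many cone types. -/
def SelfSimilarTree (T : RGraph) : Prop := T.IsTree ∧ T.LocallyFinite ∧ FinManyCones T

namespace RGraph

/-- The automorphism group of a graph, realized as the group of root-preserving,
adjacency-preserving permutations of the vertex set (for trees this is the same as the
automorphism group in the sense of graph morphisms, since in a tree an edge is determined
by its endpoints). -/
def autGroup (T : RGraph) : Subgroup (Equiv.Perm T.V) where
  carrier := {g | g T.root = T.root ∧ ∀ v w, T.Adj v w ↔ T.Adj (g v) (g w)}
  one_mem' := ⟨rfl, fun _ _ => Iff.rfl⟩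
  mul_mem' := by
    rintro a b ⟨ha1, ha2⟩ ⟨hb1, hb2⟩
    refine ⟨?_, fun v w => ?_⟩
    · show a (b T.root) = T.root
      rw [hb1, ha1]
    · exact (hb2 v w).trans (ha2 (b v) (b w))
  inv_mem' := by
    rintro a ⟨ha1, ha2⟩
    refine ⟨?_, fun v w => ?_⟩
    · show a.symm T.root = T.root
      rw [Equiv.symm_apply_eq]
      exact ha1.symm
    · have h := ha2 (a⁻¹ v) (a⁻¹ w)
      simpa using h.symm

/-- The subgroup of permutations of the vertices fixing every vertex outside
of the cone at `v`. -/
def fixOutside (T : RGraph) (v : T.V) : Subgroup (Equiv.Perm T.V) where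
  carrier := {g | ∀ w, ¬ T.Reach v w → g w = w}
  one_mem' := fun _ _ => rfl
  mul_mem' := by
    intro a b ha hb w hw
    show a (b w) = w
    rw [hb w hw, ha w hw]
  inv_mem' := by
    intro a ha w hw
    show a.symm w = w
    rw [Equiv.symm_apply_eq]
    exact (ha w hw).symm

/-- The rigid stabilizer of the vertex `v`: automorphisms fixing every vertex
outside the subtree spanned by `v` and its descendants. -/
def rist (T : RGraph) (v : T.V) : Subgroup (Equiv.Perm T.V) :=
  T.autGroup ⊓ T.fixOutside v

/-- The set of vertices at distance `n` from the root. -/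
def level (T : RGraph) (n : ℕ) : Set T.V :=
  {v | ∃ l : List T.E, T.PathFrom T.root l ∧ T.pathTarget T.root l = v ∧ l.length = n}

/-- The `n`-th rigid level stabilizer: the subgroup generated by the rigid stabilizers
of the vertices at distance `n` from the root. -/
def ristLevel (T : RGraph) (n : ℕ) : Subgroup (Equiv.Perm T.V) :=
  ⨆ v ∈ T.level n, T.rist v

/-- The `n`-th rigid level stabilizer, as a subgroup of the automorphism group. -/
def ristIn (T : RGraph) (n : ℕ) : Subgroup ↥T.autGroup :=
  (T.ristLevel n).comap T.autGroup.subtype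

end RGraph

/-- A recurrent double edge: a pair of distinct parallel edges such that there is an
oriented loop which contains one of them, or from which their common source can be
reached. -/
def HasRecDoubleEdge (A : RGraph) : Prop :=
  ∃ e₁ e₂ : A.E, e₁ ≠ e₂ ∧ A.s e₁ = A.s e₂ ∧ A.t e₁ = A.t e₂ ∧
    ((∃ (q : A.V) (l : List A.E),
        A.PathFrom q l ∧ l ≠ [] ∧ A.pathTarget q l = q ∧ (e₁ ∈ l ∨ e₂ ∈ l)) ∨
     (∃ (q : A.V) (l : List A.E),
        A.PathFrom q l ∧ l ≠ [] ∧ A.pathTarget q l = q ∧ A.Reach q (A.s e₁)))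

/-- A deterministic finite automaton over the alphabet `A`, with a partial transition
function, a single initial state, and all states accepting. -/
structure PDFA (A : Type) where
  Q : Type
  finQ : Finite Q
  neQ : Nonempty Q
  δ : Q → A → Option Q
  init : Q

namespace PDFA

variable {A : Type} (M : PDFA A)

/-- Running the automaton from state `q` on a word; `none` if it gets stuck. -/
def run : M.Q → List A → Option M.Q
  | q, [] => some q
  | q, a :: w => (M.δ q a).bind fun q' => run q' w

/-- The regular language accepted by `M`. -/
def Lang : Set (List A) := {w | (M.run M.init w).isSome}

lemma run_append (q : M.Q) (u w : List A) :
    M.run q (u ++ w) = (M.run q u).bind fun q' => M.run q' w := by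
  induction u generalizing q with
  | nil => simp [run]
  | cons a u ih =>
    simp only [List.cons_append, run]
    cases M.δ q a with
    | none => simp
    | some q' => simp [ih]

lemma isSome_of_append {q : M.Q} {u w : List A}
    (h : (M.run q (u ++ w)).isSome) : (M.run q u).isSome := by
  rw [run_append] at h
  cases hu : M.run q u with
  | none => rw [hu] at h; simp at h
  | some q' => simp

/-- The path language tree of `M`: the tree whose vertices are the words of the
language of `M`, with an edge from `w` to `w ++ [a]` whenever both belong to the
language. -/
def pathTree : RGraph where
  V := {w : List A // (M.run M.init w).isSome}
  E := {x : List A × A // (M.run M.init (x.1 ++ [x.2])).isSome}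
  s := fun x => ⟨x.1.1, M.isSome_of_append x.2⟩
  t := fun x => ⟨x.1.1 ++ [x.1.2], x.2⟩
  root := ⟨[], by simp [run]⟩

/-- The underlying rooted directed multigraph of the automaton `M`. -/
def underlying : RGraph where
  V := M.Q
  E := {x : M.Q × A // (M.δ x.1 x.2).isSome}
  s := fun x => x.1.1
  t := fun x => (M.δ x.1.1 x.1.2).get x.2
  root := M.init

/-- `M` is geometrically minimal: it has the minimal number of states among all DFAs
(over arbitrary finite nonempty alphabets) whose path language trees are isomorphic,
as unlabelled rooted trees, to the path language tree of `M`. -/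
def GeomMinimal : Prop :=
  ∀ (B : Type), Finite B → Nonempty B → ∀ N : PDFA B,
    RGraph.Iso M.pathTree N.pathTree → Nat.card M.Q ≤ Nat.card N.Q

/-- The state reached after reading the word `w` of the language. -/
def qstate (w : List A) (h : (M.run M.init w).isSome) : M.Q :=
  (M.run M.init w).get h

/-- The group of admissible permutations at the state `q`: permutations `τ` of the
alphabet fixing the letters outside `Σ(q)` and satisfying `δ(q, τ a) = δ(q, a)`. -/
def SymQ (q : M.Q) : Subgroup (Equiv.Perm A) where
  carrier := {τ | ∀ a, M.δ q (τ a) = M.δ q a ∧ (M.δ q a = none → τ a = a)}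
  one_mem' := fun _ => ⟨rfl, fun _ => rfl⟩
  mul_mem' := by
    intro τ₁ τ₂ h1 h2 a
    constructor
    · show M.δ q (τ₁ (τ₂ a)) = M.δ q a
      rw [(h1 (τ₂ a)).1, (h2 a).1]
    · intro hn
      show τ₁ (τ₂ a) = a
      rw [(h2 a).2 hn, (h1 a).2 hn]
  inv_mem' := by
    intro τ h a
    have h1 := (h (τ.symm a)).1
    rw [Equiv.apply_symm_apply] at h1
    constructor
    · show M.δ q (τ.symm a) = M.δ q a
      exact h1.symm
    · intro hn
      have h2 := (h (τ.symm a)).2 (h1.symm.trans hn)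
      rw [Equiv.apply_symm_apply] at h2
      show τ.symm a = a
      exact h2.symm

end PDFA

/-- Extending a portrait to a map on words (the first argument is the accumulated
prefix): the `i`-th letter of the image word is the image of the `i`-th letter under
the local injection at the prefix of length `i - 1`. -/
def portraitExtend {A : Type} (σ : List A → A → A) : List A → List A → List A
  | _, [] => []
  | pre, a :: w => σ pre a :: portraitExtend σ (pre ++ [a]) w

namespace S13

open RGraph Function

variable {A B C T : RGraph}

lemma pathFrom_cons_iff {A : RGraph} {q : A.V} {e : A.E} {l : List A.E} :
    A.PathFrom q (e :: l) ↔ A.s e = q ∧ A.PathFrom (A.t e) l := by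
  constructor
  · rintro ⟨hc, hh⟩
    have hc' := List.isChain_cons.1 hc
    exact ⟨hh e rfl, hc'.2, fun f hf => (hc'.1 f hf).symm⟩
  · rintro ⟨he, hc, hh⟩
    refine ⟨List.isChain_cons.2 ⟨fun f hf => (hh f hf).symm, hc⟩, ?_⟩
    intro f hf
    simp only [List.head?_cons, Option.mem_def, Option.some.injEq] at hf
    subst hf; exact he

lemma reach_cons {A : RGraph} {e : A.E} {x : A.V} (h : A.Reach (A.t e) x) :
    A.Reach (A.s e) x := by
  obtain ⟨l, hl, ht⟩ := h
  exact ⟨e :: l, pathFrom_cons_iff.2 ⟨rfl, hl⟩, ht⟩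

lemma reach_trans {A : RGraph} {q w x : A.V} (h1 : A.Reach q w) (h2 : A.Reach w x) :
    A.Reach q x := by
  obtain ⟨l, hl, ht⟩ := h2
  induction l generalizing w with
  | nil => simpa [← ht] using h1
  | cons e l ih =>
    rw [pathFrom_cons_iff] at hl
    have h1' : A.Reach q (A.t e) := A.reach_target (by rw [hl.1]; exact h1)
    exact ih h1' hl.2 ht

lemma pathFrom_append {A : RGraph} {q : A.V} {l l' : List A.E}
    (h : A.PathFrom q l) (h' : A.PathFrom (A.pathTarget q l) l') :
    A.PathFrom q (l ++ l') := by
  induction l generalizing q with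
  | nil => simpa using h'
  | cons e l ih =>
    rw [pathFrom_cons_iff] at h
    exact pathFrom_cons_iff.2 ⟨h.1, ih h.2 h'⟩

lemma tree_path_unique (hT : T.IsTree) {v : T.V} {l₁ l₂ : List T.E}
    (h1 : T.PathFrom v l₁) (h2 : T.PathFrom v l₂)
    (ht : T.pathTarget v l₁ = T.pathTarget v l₂) : l₁ = l₂ := by
  obtain ⟨⟨l₀, hl₀⟩, hv⟩ := hT.2 v
  simp only at hv
  have H1 : T.PathFrom T.root (l₀ ++ l₁) := pathFrom_append hl₀ (by rwa [hv])
  have H2 : T.PathFrom T.root (l₀ ++ l₂) := pathFrom_append hl₀ (by rwa [hv])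
  have := hT.1 (a₁ := ⟨l₀ ++ l₁, H1⟩) (a₂ := ⟨l₀ ++ l₂, H2⟩) (by
    simp only [RGraph.pathTarget_append, hv]
    exact ht)
  exact List.append_cancel_left (congrArg Subtype.val this)

/-- Identity morphism. -/
def idHom (A : RGraph) : GraphHom A A :=
  ⟨id, id, rfl, fun _ => rfl, fun _ => rfl⟩

/-- Composition of morphisms. -/
def compHom (p : GraphHom A B) (q : GraphHom B C) : GraphHom A C where
  v := q.v ∘ p.v
  e := q.e ∘ p.e
  root_eq := by simp [p.root_eq, q.root_eq]
  s_eq := fun x => by simp [q.s_eq, p.s_eq]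
  t_eq := fun x => by simp [q.t_eq, p.t_eq]

lemma iso_refl (A : RGraph) : RGraph.Iso A A :=
  ⟨idHom A, Function.bijective_id, Function.bijective_id⟩

lemma iso_trans (h1 : RGraph.Iso A B) (h2 : RGraph.Iso B C) : RGraph.Iso A C := by
  obtain ⟨p, hp1, hp2⟩ := h1
  obtain ⟨q, hq1, hq2⟩ := h2
  exact ⟨compHom p q, hq1.comp hp1, hq2.comp hp2⟩

/-- Inverse of an isomorphism. -/
noncomputable def invHom (p : GraphHom A B) (h : p.IsIso) : GraphHom B A where
  v := (Equiv.ofBijective p.v h.1).symm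
  e := (Equiv.ofBijective p.e h.2).symm
  root_eq := by
    apply h.1.injective
    rw [show p.v ((Equiv.ofBijective p.v h.1).symm B.root)
        = (Equiv.ofBijective p.v h.1) ((Equiv.ofBijective p.v h.1).symm B.root) from rfl,
      Equiv.apply_symm_apply, p.root_eq]
  s_eq := fun x => by
    apply h.1.injective
    rw [← p.s_eq]
    rw [show p.e ((Equiv.ofBijective p.e h.2).symm x)
        = (Equiv.ofBijective p.e h.2) ((Equiv.ofBijective p.e h.2).symm x) from rfl,
      Equiv.apply_symm_apply]
    rw [show p.v ((Equiv.ofBijective p.v h.1).symm (B.s x))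
        = (Equiv.ofBijective p.v h.1) ((Equiv.ofBijective p.v h.1).symm (B.s x)) from rfl,
      Equiv.apply_symm_apply]
  t_eq := fun x => by
    apply h.1.injective
    rw [← p.t_eq]
    rw [show p.e ((Equiv.ofBijective p.e h.2).symm x)
        = (Equiv.ofBijective p.e h.2) ((Equiv.ofBijective p.e h.2).symm x) from rfl,
      Equiv.apply_symm_apply]
    rw [show p.v ((Equiv.ofBijective p.v h.1).symm (B.t x))
        = (Equiv.ofBijective p.v h.1) ((Equiv.ofBijective p.v h.1).symm (B.t x)) from rfl,
      Equiv.apply_symm_apply]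

lemma invHom_iso (p : GraphHom A B) (h : p.IsIso) : (invHom p h).IsIso :=
  ⟨(Equiv.ofBijective p.v h.1).symm.bijective, (Equiv.ofBijective p.e h.2).symm.bijective⟩

@[simp] lemma invHom_right_v (p : GraphHom A B) (h : p.IsIso) (x : B.V) :
    p.v ((invHom p h).v x) = x := (Equiv.ofBijective p.v h.1).apply_symm_apply x

@[simp] lemma invHom_left_v (p : GraphHom A B) (h : p.IsIso) (x : A.V) :
    (invHom p h).v (p.v x) = x := (Equiv.ofBijective p.v h.1).symm_apply_apply x

@[simp] lemma invHom_right_e (p : GraphHom A B) (h : p.IsIso) (x : B.E) :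
    p.e ((invHom p h).e x) = x := (Equiv.ofBijective p.e h.2).apply_symm_apply x

@[simp] lemma invHom_left_e (p : GraphHom A B) (h : p.IsIso) (x : A.E) :
    (invHom p h).e (p.e x) = x := (Equiv.ofBijective p.e h.2).symm_apply_apply x

lemma iso_symm (h : RGraph.Iso A B) : RGraph.Iso B A := by
  obtain ⟨p, hp⟩ := h
  exact ⟨invHom p hp, invHom_iso p hp⟩

end S13
namespace S13

open RGraph Function

variable {A B C T : RGraph}

lemma reach_down {A : RGraph} {v : A.V} {x y : (A.subgraph v).V}
    (h : (A.subgraph v).Reach x y) : A.Reach x.1 y.1 := by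
  obtain ⟨l, hl, ht⟩ := h
  induction l generalizing x with
  | nil =>
    have : x = y := ht
    subst this; exact A.reach_self _
  | cons a l ih =>
    rw [pathFrom_cons_iff] at hl
    have h1 := ih hl.2 ht
    have hs : A.s a.1 = x.1 := congrArg Subtype.val hl.1
    rw [← hs]
    exact reach_cons h1

lemma reach_up {A : RGraph} {v : A.V} (x y : (A.subgraph v).V)
    (h : A.Reach x.1 y.1) : (A.subgraph v).Reach x y := by
  obtain ⟨l, hl, ht⟩ := h
  induction l generalizing x with
  | nil =>
    have : x = y := Subtype.ext ht
    subst this; exact (A.subgraph v).reach_self x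
  | cons a l ih =>
    rw [pathFrom_cons_iff] at hl
    have ha : A.Reach v (A.s a) := by rw [hl.1]; exact x.2
    have h1 := ih ((A.subgraph v).t ⟨a, ha⟩) hl.2 ht
    have hs : (A.subgraph v).s ⟨a, ha⟩ = x := Subtype.ext hl.1
    rw [← hs]
    exact reach_cons h1

/-- Iso of graphs induces iso of cones at corresponding vertices. -/
lemma iso_subgraph_of_iso (p : GraphHom A B) (hp : p.IsIso) (w : A.V) :
    RGraph.Iso (A.subgraph w) (B.subgraph (p.v w)) := by
  refine ⟨{ v := fun x => ⟨p.v x.1, p.reach_map x.2⟩,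
            e := fun e => ⟨p.e e.1, by rw [p.s_eq]; exact p.reach_map e.2⟩,
            root_eq := Subtype.ext rfl,
            s_eq := fun e => Subtype.ext (p.s_eq e.1),
            t_eq := fun e => Subtype.ext (p.t_eq e.1) }, ⟨?_, ?_⟩, ⟨?_, ?_⟩⟩
  · intro x y hxy
    exact Subtype.ext (hp.1.injective (congrArg Subtype.val hxy))
  · rintro ⟨y, hy⟩
    refine ⟨⟨(invHom p hp).v y, ?_⟩, Subtype.ext ?_⟩
    · have h2 := (invHom p hp).reach_map hy
      rwa [invHom_left_v] at h2
    · exact invHom_right_v p hp y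
  · intro x y hxy
    exact Subtype.ext (hp.2.injective (congrArg Subtype.val hxy))
  · rintro ⟨f, hf⟩
    refine ⟨⟨(invHom p hp).e f, ?_⟩, Subtype.ext ?_⟩
    · rw [(invHom p hp).s_eq]
      have h2 := (invHom p hp).reach_map hf
      rwa [invHom_left_v] at h2
    · exact invHom_right_e p hp f

/-- Cones of cones are cones. -/
lemma iso_subsub {A : RGraph} {v : A.V} (w : (A.subgraph v).V) :
    RGraph.Iso ((A.subgraph v).subgraph w) (A.subgraph w.1) := by
  refine ⟨{ v := fun x => ⟨x.1.1, reach_down x.2⟩,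
            e := fun e => ⟨e.1.1, reach_down e.2⟩,
            root_eq := Subtype.ext rfl,
            s_eq := fun e => Subtype.ext rfl,
            t_eq := fun e => Subtype.ext rfl }, ⟨?_, ?_⟩, ⟨?_, ?_⟩⟩
  · intro x y hxy
    have h := congrArg Subtype.val hxy
    exact Subtype.ext (Subtype.ext h)
  · rintro ⟨x, hx⟩
    exact ⟨⟨⟨x, reach_trans w.2 hx⟩, reach_up w _ hx⟩, Subtype.ext rfl⟩
  · intro x y hxy
    have h := congrArg Subtype.val hxy
    exact Subtype.ext (Subtype.ext h)
  · rintro ⟨f, hf⟩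
    exact ⟨⟨⟨f, reach_trans w.2 hf⟩, reach_up w _ hf⟩, Subtype.ext rfl⟩

/-- Transport of cones along an iso of cones. -/
lemma cone_transport {T : RGraph} {v v' : T.V}
    (φ : GraphHom (T.subgraph v) (T.subgraph v')) (hφ : φ.IsIso)
    (w : (T.subgraph v).V) :
    RGraph.Iso (T.subgraph w.1) (T.subgraph (φ.v w).1) :=
  iso_trans (iso_symm (iso_subsub w))
    (iso_trans (iso_subgraph_of_iso φ hφ w) (iso_subsub (φ.v w)))

/-- The cone-type setoid. -/
def coneSetoid (T : RGraph) : Setoid T.V where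
  r v w := RGraph.Iso (T.subgraph v) (T.subgraph w)
  iseqv := ⟨fun _ => iso_refl _, iso_symm, iso_trans⟩

end S13
namespace S13

open RGraph Function

variable {A B T : RGraph}

lemma outMap_bij_of_covering {p : GraphHom T A} (hp : p.IsCovering) (q : T.V) :
    Function.Bijective (p.outMap q) := by
  constructor
  · rintro ⟨e₁, h₁⟩ ⟨e₂, h₂⟩ heq
    have hval : p.e e₁ = p.e e₂ := congrArg Subtype.val heq
    have hpath : A.PathFrom (p.v q) [p.e e₁] := by
      refine pathFrom_cons_iff.2 ⟨?_, A.pathFrom_nil _⟩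
      rw [p.s_eq, h₁]
    obtain ⟨l₀, _, hu⟩ := hp.2 q [p.e e₁] hpath
    have k₁ : [e₁] = l₀ := hu [e₁] ⟨pathFrom_cons_iff.2 ⟨h₁, T.pathFrom_nil _⟩, rfl⟩
    have k₂ : [e₂] = l₀ := hu [e₂] ⟨pathFrom_cons_iff.2 ⟨h₂, T.pathFrom_nil _⟩, by simp [hval]⟩
    have := k₁.trans k₂.symm
    exact Subtype.ext (by injection this)
  · rintro ⟨f, hf⟩
    have hpath : A.PathFrom (p.v q) [f] :=
      pathFrom_cons_iff.2 ⟨hf, A.pathFrom_nil _⟩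
    obtain ⟨l, ⟨hl, hlm⟩, _⟩ := hp.2 q [f] hpath
    match l, hlm with
    | [e], hlm =>
      have he : p.e e = f := by injection hlm
      have hs : T.s e = q := (pathFrom_cons_iff.1 hl).1
      exact ⟨⟨e, hs⟩, Subtype.ext he⟩

lemma uplp_of_outMap_bij {p : GraphHom T A} (h : ∀ q, Function.Bijective (p.outMap q)) :
    p.UPLP := by
  intro q l' hl'
  induction l' generalizing q with
  | nil =>
    refine ⟨[], ⟨T.pathFrom_nil _, rfl⟩, ?_⟩
    rintro l ⟨_, hm⟩
    exact List.map_eq_nil_iff.1 hm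
  | cons e' l' ih =>
    rw [pathFrom_cons_iff] at hl'
    obtain ⟨⟨e, he⟩, hee⟩ := (h q).surjective ⟨e', hl'.1⟩
    have he' : p.e e = e' := congrArg Subtype.val hee
    have ht' : A.PathFrom (p.v (T.t e)) l' := by rw [← p.t_eq, he']; exact hl'.2
    obtain ⟨l, ⟨hlp, hlm⟩, hu⟩ := ih (T.t e) ht'
    refine ⟨e :: l, ⟨pathFrom_cons_iff.2 ⟨he, hlp⟩, by simp [he', hlm]⟩, ?_⟩
    rintro m ⟨hm, hmm⟩
    match m, hmm with
    | f :: m, hmm =>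
      simp only [List.map_cons, List.cons.injEq] at hmm
      rw [pathFrom_cons_iff] at hm
      have hf : f = e := by
        have h2 : p.outMap q ⟨f, hm.1⟩ = p.outMap q ⟨e, he⟩ := by
          apply Subtype.ext
          show p.e f = p.e e
          rw [hmm.1, he']
        exact congrArg Subtype.val ((h q).injective h2)
      subst hf
      rw [hu m ⟨hm.2, hmm.2⟩]

/-- The universal covering tree of `A` based at an arbitrary vertex `q`. -/
def genCover (A : RGraph) (q : A.V) : RGraph where
  V := {l : List A.E // A.PathFrom q l}
  E := {x : {l : List A.E // A.PathFrom q l} × A.E // A.s x.2 = A.pathTarget q x.1.1}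
  s := fun x => x.1.1
  t := fun x => ⟨x.1.1.1 ++ [x.1.2], RGraph.pathFrom_append_single x.1.1.2 x.2⟩
  root := ⟨[], A.pathFrom_nil q⟩

/-- For a covering `p : T → A` with `T` a tree, the cone of `T` at `v` is isomorphic
to the path tree of `A` at `p.v v`. -/
lemma cone_iso_genCover (hT : T.IsTree) (p : GraphHom T A) (hp : p.IsCovering) (v : T.V) :
    RGraph.Iso (genCover A (p.v v)) (T.subgraph v) := by
  classical
  have hout := outMap_bij_of_covering hp
  have hlift : ∀ x : (genCover A (p.v v)).V,
      ∃! l : List T.E, T.PathFrom v l ∧ l.map p.e = x.1 := fun x => hp.2 v x.1 x.2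
  set L : (genCover A (p.v v)).V → List T.E := fun x => (hlift x).choose with hL
  have hLspec : ∀ x, T.PathFrom v (L x) ∧ (L x).map p.e = x.1 :=
    fun x => (hlift x).choose_spec.1
  have hLuniq : ∀ x m, T.PathFrom v m → m.map p.e = x.1 → m = L x :=
    fun x m h1 h2 => (hlift x).choose_spec.2 m ⟨h1, h2⟩
  have hLt : ∀ x, p.v (T.pathTarget v (L x)) = A.pathTarget (p.v v) x.1 := by
    intro x
    conv_rhs => rw [← (hLspec x).2]
    exact (p.pathTarget_map v (L x)).symm
  have hedge : ∀ x : (genCover A (p.v v)).E,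
      ∃! e : T.E, T.s e = T.pathTarget v (L x.1.1) ∧ p.e e = x.1.2 := by
    intro x
    have hs : A.s x.1.2 = p.v (T.pathTarget v (L x.1.1)) := by
      rw [x.2]; exact (hLt x.1.1).symm
    obtain ⟨⟨e, he⟩, hee⟩ := (hout _).surjective ⟨x.1.2, hs⟩
    have hee' : p.e e = x.1.2 := congrArg Subtype.val hee
    refine ⟨e, ⟨he, hee'⟩, ?_⟩
    rintro f ⟨hf1, hf2⟩
    have h2 : p.outMap _ ⟨f, hf1⟩ = p.outMap _ ⟨e, he⟩ := by
      apply Subtype.ext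
      show p.e f = p.e e
      rw [hf2, hee']
    exact congrArg Subtype.val ((hout _).injective h2)
  set E : (genCover A (p.v v)).E → T.E := fun x => (hedge x).choose with hE
  have hE1 : ∀ x, T.s (E x) = T.pathTarget v (L x.1.1) := fun x => (hedge x).choose_spec.1.1
  have hE2 : ∀ x, p.e (E x) = x.1.2 := fun x => (hedge x).choose_spec.1.2
  have hLcons : ∀ x : (genCover A (p.v v)).E,
      L ((genCover A (p.v v)).t x) = L x.1.1 ++ [E x] := by
    intro x
    refine (hLuniq _ _ ?_ ?_).symm
    · exact RGraph.pathFrom_append_single (hLspec x.1.1).1 (hE1 x)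
    · show (L x.1.1 ++ [E x]).map p.e = x.1.1.1 ++ [x.1.2]
      rw [List.map_append, (hLspec x.1.1).2, List.map_singleton, hE2]
  have hLnil : L (genCover A (p.v v)).root = [] :=
    (hLuniq _ [] (T.pathFrom_nil v) rfl).symm
  refine ⟨{ v := fun x => ⟨T.pathTarget v (L x), L x, (hLspec x).1, rfl⟩,
            e := fun x => ⟨E x, by rw [hE1]; exact ⟨L x.1.1, (hLspec x.1.1).1, rfl⟩⟩,
            root_eq := Subtype.ext (by
              show T.pathTarget v (L (genCover A (p.v v)).root) = v
              rw [hLnil]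
              rfl),
            s_eq := fun x => Subtype.ext (hE1 x),
            t_eq := fun x => Subtype.ext (by
              show T.t (E x) = T.pathTarget v (L ((genCover A (p.v v)).t x))
              rw [hLcons x, RGraph.pathTarget_append_single]) }, ⟨?_, ?_⟩, ⟨?_, ?_⟩⟩
  · intro x y hxy
    have h1 : T.pathTarget v (L x) = T.pathTarget v (L y) := congrArg Subtype.val hxy
    have h2 : L x = L y := tree_path_unique hT (hLspec x).1 (hLspec y).1 h1
    apply Subtype.ext
    rw [← (hLspec x).2, ← (hLspec y).2, h2]
  · rintro ⟨x, hx⟩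
    obtain ⟨m, hm, hmt⟩ := hx
    have hX : A.PathFrom (p.v v) (m.map p.e) := by
      have := p.pathFrom_map hm
      exact this
    refine ⟨⟨m.map p.e, hX⟩, Subtype.ext ?_⟩
    show T.pathTarget v (L ⟨m.map p.e, hX⟩) = x
    rw [← hLuniq ⟨m.map p.e, hX⟩ m hm rfl]
    exact hmt
  · intro x y hxy
    have h1 : E x = E y := congrArg Subtype.val hxy
    have h2 : T.pathTarget v (L x.1.1) = T.pathTarget v (L y.1.1) := by
      rw [← hE1 x, ← hE1 y, h1]
    have h3 : L x.1.1 = L y.1.1 := tree_path_unique hT (hLspec x.1.1).1 (hLspec y.1.1).1 h2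
    have h4 : x.1.1 = y.1.1 := by
      apply Subtype.ext
      rw [← (hLspec x.1.1).2, ← (hLspec y.1.1).2, h3]
    have h5 : x.1.2 = y.1.2 := by rw [← hE2 x, ← hE2 y, h1]
    exact Subtype.ext (Prod.ext h4 h5)
  · rintro ⟨f, hf⟩
    obtain ⟨m, hm, hmt⟩ := hf
    have hX : A.PathFrom (p.v v) (m.map p.e) := p.pathFrom_map hm
    have hx2 : A.s (p.e f) = A.pathTarget (p.v v) (m.map p.e) := by
      rw [p.s_eq, ← hmt, p.pathTarget_map]
    set x : (genCover A (p.v v)).E := ⟨(⟨m.map p.e, hX⟩, p.e f), hx2⟩ with hxdef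
    have hLm : L x.1.1 = m := (hLuniq x.1.1 m hm rfl).symm
    have hEf : E x = f := by
      refine ((hedge x).choose_spec.2 f ⟨?_, rfl⟩).symm
      rw [hLm]; exact hmt.symm
    exact ⟨x, Subtype.ext hEf⟩

/-- For a covering of a tree, cones over the same vertex are isomorphic. -/
lemma cone_iso_of_fiber (hT : T.IsTree) (p : GraphHom T A) (hp : p.IsCovering)
    {v w : T.V} (hvw : p.v v = p.v w) :
    RGraph.Iso (T.subgraph v) (T.subgraph w) := by
  have h1 := cone_iso_genCover hT p hp v
  have h2 := cone_iso_genCover hT p hp w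
  rw [hvw] at h1
  exact iso_trans (iso_symm h1) h2

end S13
namespace S13

open RGraph Function

/-- Representative of the cone type of `v`. -/
noncomputable def crep (T : RGraph) (v : T.V) : T.V :=
  (Quotient.mk (coneSetoid T) v).out

lemma crep_iso (T : RGraph) (v : T.V) :
    RGraph.Iso (T.subgraph (crep T v)) (T.subgraph v) :=
  @Quotient.mk_out _ (coneSetoid T) v

lemma crep_mk (T : RGraph) (v : T.V) :
    Quotient.mk (coneSetoid T) (crep T v) = Quotient.mk (coneSetoid T) v :=
  Quotient.sound (crep_iso T v)

lemma crep_crep (T : RGraph) (v : T.V) : crep T (crep T v) = crep T v :=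
  congrArg Quotient.out (crep_mk T v)

/-- A chosen iso from the cone at `v` to the cone at its representative. -/
noncomputable def φf (T : RGraph) (v : T.V) :
    GraphHom (T.subgraph v) (T.subgraph (crep T v)) :=
  (iso_symm (crep_iso T v)).choose

lemma φf_iso (T : RGraph) (v : T.V) : (φf T v).IsIso :=
  (iso_symm (crep_iso T v)).choose_spec

lemma πedge_src (T : RGraph) (e : T.E) :
    T.s ((φf T (T.s e)).e ⟨e, T.reach_self _⟩).1 = crep T (T.s e) := by
  have h := (φf T (T.s e)).s_eq ⟨e, T.reach_self _⟩
  have hroot : (T.subgraph (T.s e)).s ⟨e, T.reach_self _⟩ = (T.subgraph (T.s e)).root :=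
    Subtype.ext rfl
  rw [hroot, (φf T (T.s e)).root_eq] at h
  exact congrArg Subtype.val h

/-- The quotient of `T` by cone types. -/
noncomputable def Bgraph (T : RGraph) : RGraph where
  V := Quotient (coneSetoid T)
  E := {e : T.E // crep T (T.s e) = T.s e}
  s := fun e => Quotient.mk _ (T.s e.1)
  t := fun e => Quotient.mk _ (T.t e.1)
  root := Quotient.mk _ T.root

/-- The covering morphism from `T` to its cone type quotient. -/
noncomputable def πhom (T : RGraph) : GraphHom T (Bgraph T) where
  v := Quotient.mk _
  e := fun e => ⟨((φf T (T.s e)).e ⟨e, T.reach_self _⟩).1,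
    by rw [πedge_src]; exact crep_crep T _⟩
  root_eq := rfl
  s_eq := fun e => by
    show Quotient.mk _ (T.s _) = Quotient.mk _ (T.s e)
    rw [πedge_src]
    exact Quotient.sound (crep_iso T (T.s e))
  t_eq := fun e => by
    show Quotient.mk _ (T.t ((φf T (T.s e)).e ⟨e, T.reach_self _⟩).1)
      = Quotient.mk _ (T.t e)
    apply Quotient.sound
    have h := (φf T (T.s e)).t_eq ⟨e, T.reach_self _⟩
    have h2 := cone_transport (φf T (T.s e)) (φf_iso T (T.s e))
      ((T.subgraph (T.s e)).t ⟨e, T.reach_self _⟩)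
    rw [← h] at h2
    exact iso_symm h2

lemma πe_eq (T : RGraph) (e : T.E) (q : T.V) (h : T.s e = q) (hr : T.Reach q (T.s e)) :
    ((φf T (T.s e)).e ⟨e, T.reach_self _⟩).1 = ((φf T q).e ⟨e, hr⟩).1 := by
  subst h; rfl

lemma πhom_covering (T : RGraph) : (πhom T).IsCovering := by
  constructor
  · intro b
    exact ⟨b.out, Quotient.out_eq b⟩
  · apply uplp_of_outMap_bij
    intro q
    constructor
    · rintro ⟨e₁, h₁⟩ ⟨e₂, h₂⟩ heq
      have hv : ((φf T (T.s e₁)).e ⟨e₁, T.reach_self _⟩).1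
          = ((φf T (T.s e₂)).e ⟨e₂, T.reach_self _⟩).1 :=
        congrArg Subtype.val (congrArg Subtype.val heq)
      have hr₁ : T.Reach q (T.s e₁) := by rw [h₁]; exact T.reach_self q
      have hr₂ : T.Reach q (T.s e₂) := by rw [h₂]; exact T.reach_self q
      rw [πe_eq T e₁ q h₁ hr₁, πe_eq T e₂ q h₂ hr₂] at hv
      have h3 := (φf_iso T q).2.injective (Subtype.ext hv)
      have h4 : e₁ = e₂ := congrArg Subtype.val h3
      exact Subtype.ext h4
    · rintro ⟨⟨f, hcrep⟩, hf⟩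
      have hsf : T.s f = crep T q := by
        have h2 : crep T (T.s f) = crep T q := congrArg Quotient.out hf
        rw [← h2, hcrep]
      have hrf : T.Reach (crep T q) (T.s f) := by rw [hsf]; exact T.reach_self _
      obtain ⟨eh, heh⟩ := (φf_iso T q).2.surjective ⟨f, hrf⟩
      have hs1 : (T.subgraph q).s eh = (T.subgraph q).root := by
        apply (φf_iso T q).1.injective
        rw [← (φf T q).s_eq, heh, (φf T q).root_eq]
        exact Subtype.ext hsf
      have hsq : T.s eh.1 = q := congrArg Subtype.val hs1
      refine ⟨⟨eh.1, hsq⟩, ?_⟩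
      apply Subtype.ext
      apply Subtype.ext
      show ((φf T (T.s eh.1)).e ⟨eh.1, T.reach_self _⟩).1 = f
      have hrq : T.Reach q (T.s eh.1) := by rw [hsq]; exact T.reach_self q
      rw [πe_eq T eh.1 q hsq hrq]
      have h4 : (⟨eh.1, hrq⟩ : (T.subgraph q).E) = eh := Subtype.ext rfl
      rw [h4, heh]

end S13
/-- Aut-rigidity. Let `T` be a self-similar tree, `Ā` a minimal
covering quotient of `T` and `π : T → Ā` a covering morphism. Then every automorphism
`g` of `T` is type-preserving: `π₀ ∘ g₀ = π₀`. -/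
theorem stmt13 (T : RGraph) (hT : SelfSimilarTree T) (Abar : RGraph)
    (hmin : IsMinCovQuotient T Abar) (p : GraphHom T Abar) (hp : p.IsCovering)
    (g : GraphHom T T) (hg : g.IsIso) :
    ∀ v : T.V, p.v (g.v v) = p.v v := by
  classical
  obtain ⟨hTree, hLF, hCones⟩ := hT
  intro v
  have hBQ : IsCovQuotient T (S13.Bgraph T) := ⟨S13.πhom T, S13.πhom_covering T⟩
  -- the cone type quotient has finitely many vertices
  obtain ⟨S, hSfin, hS⟩ := hCones
  haveI := hSfin.to_subtype
  have hBfin : Finite (S13.Bgraph T).V := by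
    apply Finite.of_surjective (fun x : S => Quotient.mk (S13.coneSetoid T) x.1)
    intro b
    obtain ⟨w, rfl⟩ := Quotient.exists_rep b
    obtain ⟨u, huS, hiso⟩ := hS w
    exact ⟨⟨u, huS⟩, Quotient.sound (S13.iso_symm hiso)⟩
  -- minimality
  have hle : Cardinal.mk Abar.V ≤ Cardinal.mk (S13.Bgraph T).V := hmin.2 _ hBQ
  have hAfin : Finite Abar.V := by
    have hB : Cardinal.mk (S13.Bgraph T).V < Cardinal.aleph0 :=
      Cardinal.lt_aleph0_of_finite _
    exact Cardinal.mk_lt_aleph0_iff.1 (lt_of_le_of_lt hle hB)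
  -- the comparison map
  set al : Abar.V → (S13.Bgraph T).V :=
    fun q => Quotient.mk (S13.coneSetoid T) (hp.1 q).choose with hal
  have hal_spec : ∀ q, p.v (hp.1 q).choose = q := fun q => (hp.1 q).choose_spec
  have hal_surj : Function.Surjective al := by
    intro b
    obtain ⟨w, rfl⟩ := Quotient.exists_rep b
    exact ⟨p.v w, Quotient.sound (S13.cone_iso_of_fiber hTree p hp (hal_spec (p.v w)))⟩
  have hcard : Nat.card Abar.V = Nat.card (S13.Bgraph T).V := by
    have h1 : Nat.card (S13.Bgraph T).V ≤ Nat.card Abar.V :=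
      Nat.card_le_card_of_surjective al hal_surj
    have h2 : Nat.card Abar.V ≤ Nat.card (S13.Bgraph T).V :=
      Cardinal.toNat_le_toNat hle (Cardinal.lt_aleph0_of_finite _)
    omega
  have hal_inj : Function.Injective al :=
    ((Nat.bijective_iff_surjective_and_card al).2 ⟨hal_surj, hcard⟩).injective
  apply hal_inj
  show Quotient.mk (S13.coneSetoid T) (hp.1 (p.v (g.v v))).choose
    = Quotient.mk (S13.coneSetoid T) (hp.1 (p.v v)).choose
  apply Quotient.sound
  have e1 : RGraph.Iso (T.subgraph ((hp.1 (p.v (g.v v))).choose)) (T.subgraph (g.v v)) :=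
    S13.cone_iso_of_fiber hTree p hp (hal_spec _)
  have e2 : RGraph.Iso (T.subgraph v) (T.subgraph (g.v v)) :=
    S13.iso_subgraph_of_iso g hg v
  have e3 : RGraph.Iso (T.subgraph ((hp.1 (p.v v)).choose)) (T.subgraph v) :=
    S13.cone_iso_of_fiber hTree p hp (hal_spec _)
  exact S13.iso_trans e1 (S13.iso_trans (S13.iso_symm e2) (S13.iso_symm e3))
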